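/- For every n ≥ 2, the generalized quaternion group of order 4n is not filled. -/

import Mathlib

open Pointwise

/-- `S` is product-free if `S ∩ SS = ∅`. -/
def ProductFree {G : Type*} [Group G] (S : Set G) : Prop :=
  Disjoint S (S * S)

/-- `S` is locally maximal product-free if it is product-free and not properly
contained in any product-free set. -/
def LocallyMaximalPF {G : Type*} [Group G] (S : Set G) : Prop :=
  ProductFree S ∧ ∀ T : Set G, ProductFree T → S ⊆ T → S = T

/-- `S` fills `G` (is complete) if every non-identity element lies in `S ∪ SS`. -/
def Fills {G : Type*} [Group G] (S : Set G) : Prop :=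
  ∀ g : G, g ≠ 1 → g ∈ S ∪ S * S

/-- `G` is filled if every locally maximal product-free set fills `G`. -/
def Filled (G : Type*) [Group G] : Prop :=
  ∀ S : Set G, LocallyMaximalPF S → Fills S

namespace QuatAux

open QuaternionGroup

/-- If `P` is a sum-free subset of `ZMod (2n)` containing `n` such that every
element outside `P` is "blocked", then the corresponding set of rotations is a
locally maximal product-free set of the quaternion group which does not fill it. -/
lemma not_filled_of_good (n : ℕ) (hn : 1 ≤ n) (P : ZMod (2 * n) → Prop)
    (hsf : ∀ i j : ZMod (2 * n), P i → P j → ¬ P (i + j))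
    (hPn : P ((n : ℕ) : ZMod (2 * n)))
    (hblock : ∀ i : ZMod (2 * n), ¬ P i →
      (∃ j, P j ∧ P (i + j)) ∨ (∃ j k, P j ∧ P k ∧ j + k = i) ∨ P (i + i)) :
    ¬ Filled (QuaternionGroup n) := by
  intro hF
  set S : Set (QuaternionGroup n) := {g | ∃ i, P i ∧ g = a i} with hSdef
  have hmemS : ∀ i, P i → a i ∈ S := fun i hi => ⟨i, hi, rfl⟩
  have hPF : ProductFree S := by
    rw [ProductFree, Set.disjoint_left]
    rintro g ⟨i, hi, rfl⟩ hg
    rw [Set.mem_mul] at hg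
    obtain ⟨x, ⟨jx, hjx, rfl⟩, y, ⟨jy, hjy, rfl⟩, hxy⟩ := hg
    rw [a_mul_a] at hxy
    simp only [a.injEq] at hxy
    exact hsf _ _ hjx hjy (hxy ▸ hi)
  have hLM : LocallyMaximalPF S := by
    refine ⟨hPF, fun T hT hST => ?_⟩
    have hTd := Set.disjoint_left.mp hT
    apply Set.Subset.antisymm hST
    intro g hgT
    by_contra hgS
    rcases g with i | j
    · -- g = a i with ¬ P i
      have hPi : ¬ P i := fun h => hgS (hmemS i h)
      rcases hblock i hPi with ⟨j, hPj, hPij⟩ | ⟨j, k, hPj, hPk, hjk⟩ | hPii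
      · exact hTd (hST (hmemS _ hPij))
          (a_mul_a i j ▸ Set.mul_mem_mul hgT (hST (hmemS _ hPj)))
      · have : a j * a k = a i := by rw [a_mul_a, hjk]
        exact hTd hgT
          (this ▸ Set.mul_mem_mul (hST (hmemS _ hPj)) (hST (hmemS _ hPk)))
      · exact hTd (hST (hmemS _ hPii))
          (a_mul_a i i ▸ Set.mul_mem_mul hgT hgT)
    · -- g = xa j; then g * g = a n ∈ S
      have hprod : xa j * xa j = a ((n : ℕ) : ZMod (2 * n)) := by
        rw [xa_mul_xa]
        congr 1
        ring
      exact hTd (hST (hmemS _ hPn)) (hprod ▸ Set.mul_mem_mul hgT hgT)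
  have hfills := hF S hLM
  have hne : (xa 0 : QuaternionGroup n) ≠ 1 := by
    rw [QuaternionGroup.one_def]
    intro h; cases h
  rcases hfills (xa 0) hne with h | h
  · obtain ⟨i, _, heq⟩ := h
    simp at heq
  · rw [Set.mem_mul] at h
    obtain ⟨x, ⟨jx, _, rfl⟩, y, ⟨jy, _, rfl⟩, hxy⟩ := h
    rw [a_mul_a] at hxy
    simp at hxy

end QuatAux

theorem quaternion_not_filled (n : ℕ) (hn : 2 ≤ n) :
    ¬ Filled (QuaternionGroup n) := by
  rcases eq_or_lt_of_le hn with h2 | h3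
  · -- n = 2 : use S = {a 2} ⊆ Q₈
    subst h2
    exact QuatAux.not_filled_of_good 2 (by norm_num)
      (fun i => i = 2) (by decide) (by decide) (by decide)
  · -- n ≥ 3 : use the interval [q+1, 2q+1], q = n/2
    have hn3 : 3 ≤ n := h3
    haveI : NeZero (2 * n) := ⟨by omega⟩
    set q := n / 2 with hq
    have hqn : n = 2 * q ∨ n = 2 * q + 1 := by omega
    apply QuatAux.not_filled_of_good n (by omega)
      (fun z => q + 1 ≤ z.val ∧ z.val ≤ 2 * q + 1)
    · -- sum-free
      intro i j hi hj hij
      have hiv : i.val < 2 * n := ZMod.val_lt i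
      have hjv : j.val < 2 * n := ZMod.val_lt j
      have hadd : (i + j).val = (i.val + j.val) % (2 * n) := ZMod.val_add i j
      rcases lt_or_ge (i.val + j.val) (2 * n) with h' | h'
      · rw [Nat.mod_eq_of_lt h'] at hadd
        omega
      · rw [Nat.mod_eq_sub_mod h', Nat.mod_eq_of_lt (by omega)] at hadd
        omega
    · -- contains n
      have : ((n : ℕ) : ZMod (2 * n)).val = n := ZMod.val_cast_of_lt (by omega)
      rw [this]
      omega
    · -- blocking
      intro i hPi
      have hiv : i.val < 2 * n := ZMod.val_lt i
      have hi' : ((i.val : ℕ) : ZMod (2 * n)) = i := ZMod.natCast_rightInverse i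
      push_neg at hPi
      rcases lt_or_ge i.val (q + 1) with hlow | hhigh
      · -- i.val ≤ q : left branch, add q+1
        left
        refine ⟨((q + 1 : ℕ) : ZMod (2 * n)), ?_, ?_⟩
        · rw [ZMod.val_cast_of_lt (by omega)]
          omega
        · have : (i + ((q + 1 : ℕ) : ZMod (2 * n))).val = i.val + (q + 1) := by
            rw [ZMod.val_add, ZMod.val_cast_of_lt (show q + 1 < 2 * n by omega),
              Nat.mod_eq_of_lt (by omega)]
          rw [this]
          omega
      · have hhigh2 : 2 * q + 2 ≤ i.val := by
          have := hPi hhigh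
          omega
        right; left
        rcases le_or_gt i.val (3 * q + 2) with hcase | hcase
        · refine ⟨((q + 1 : ℕ) : ZMod (2 * n)), ((i.val - (q + 1) : ℕ) : ZMod (2 * n)),
            ?_, ?_, ?_⟩
          · rw [ZMod.val_cast_of_lt (by omega)]; omega
          · rw [ZMod.val_cast_of_lt (by omega)]; omega
          · rw [← Nat.cast_add, show q + 1 + (i.val - (q + 1)) = i.val by omega]
            exact hi'
        · refine ⟨((i.val - (2 * q + 1) : ℕ) : ZMod (2 * n)), ((2 * q + 1 : ℕ) : ZMod (2 * n)),
            ?_, ?_, ?_⟩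
          · rw [ZMod.val_cast_of_lt (by omega)]; omega
          · rw [ZMod.val_cast_of_lt (by omega)]; omega
          · rw [← Nat.cast_add, show i.val - (2 * q + 1) + (2 * q + 1) = i.val by omega]
            exact hi'
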